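/- arXiv:1708.04269 — 5 statements merged into one kernel-verified Lean document; each statement's English description precedes it below -/
import Mathlib

section
/- The series ∑_{n≥1} 1/(n² · binom(2n, n)) equals π²/18, i.e. ζ(2) = 3 · ∑_{n≥1} 1/(n² · binom(2n, n)). -/
open MeasureTheory Real Set

lemma prod_fact (a : ℕ) : ∀ b : ℕ,
    (a.factorial : ℂ) * ∏ j ∈ Finset.range (b + 1), ((a : ℂ) + 1 + j) =
      ((a + b + 1).factorial : ℂ)
  | 0 => by simp [Nat.factorial_succ]; push_cast; ring
  | b + 1 => by
    rw [Finset.prod_range_succ, ← mul_assoc, prod_fact a b]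
    have h1 : a + (b + 1) + 1 = (a + b + 1) + 1 := by ring
    have h2 : ((a + b + 1) + 1).factorial = ((a + b + 1) + 1) * (a + b + 1).factorial :=
      Nat.factorial_succ _
    rw [h1, h2]
    push_cast; ring

lemma beta_nat (a b : ℕ) :
    ∫ t in (0:ℝ)..1, t ^ a * (1 - t) ^ b =
      (a.factorial * b.factorial : ℝ) / ((a + b + 1).factorial) := by
  have h := Complex.betaIntegral_eval_nat_add_one_right
      (u := (a : ℂ) + 1) (by simp; positivity) b
  rw [Complex.betaIntegral] at h
  have key : (∫ x : ℝ in (0:ℝ)..1, (x : ℂ) ^ ((a : ℂ) + 1 - 1) * (1 - (x : ℂ)) ^ ((b : ℂ) + 1 - 1)) =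
      ((∫ t in (0:ℝ)..1, t ^ a * (1 - t) ^ b : ℝ) : ℂ) := by
    rw [← intervalIntegral.integral_ofReal]
    apply intervalIntegral.integral_congr
    intro x _
    have e1 : (a : ℂ) + 1 - 1 = ((a : ℕ) : ℂ) := by ring
    have e2 : ((b : ℕ) : ℂ) + 1 - 1 = ((b : ℕ) : ℂ) := by ring
    simp only [e1, e2, Complex.cpow_natCast]
    push_cast
    ring
  rw [key] at h
  have hprod : (∏ j ∈ Finset.range (b + 1), ((a : ℂ) + 1 + j)) =
      ((a + b + 1).factorial : ℂ) / (a.factorial : ℂ) := by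
    rw [eq_div_iff (by exact_mod_cast a.factorial_ne_zero)]
    rw [mul_comm]; exact prod_fact a b
  rw [hprod] at h
  have hr : ((b.factorial : ℂ)) / (((a + b + 1).factorial : ℂ) / (a.factorial : ℂ)) =
      (((a.factorial * b.factorial : ℝ) / ((a + b + 1).factorial) : ℝ) : ℂ) := by
    have h0 : ((a + b + 1).factorial : ℂ) ≠ 0 := by exact_mod_cast (a+b+1).factorial_ne_zero
    have h1 : ((a.factorial : ℂ)) ≠ 0 := by exact_mod_cast a.factorial_ne_zero
    push_cast
    field_simp
  rw [hr] at h
  exact_mod_cast h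


-- integral of monomial over Ioo 0 1
lemma mono_int (m : ℕ) : ∫ t in Ioo (0:ℝ) 1, t ^ m = 1 / (m + 1) := by
  rw [← integral_Ioc_eq_integral_Ioo, ← intervalIntegral.integral_of_le (by norm_num : (0:ℝ) ≤ 1)]
  simp [integral_pow]

-- slice log series
lemma slice_hasSum {k : ℕ} (hk : 1 ≤ k) {t : ℝ} (ht : t ∈ Ioo (0:ℝ) 1) :
    HasSum (fun n : ℕ => t ^ (k * n + (k - 1)) / (n + 1)) (-Real.log (1 - t ^ k) / t) := by
  obtain ⟨ht0, ht1⟩ := ht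
  have hx : |t ^ k| < 1 := by
    rw [abs_of_nonneg (by positivity)]
    exact pow_lt_one₀ (le_of_lt ht0) ht1 (by omega)
  have h := (hasSum_pow_div_log_of_abs_lt_one hx).div_const t
  convert h using 2 with n
  · rfl
  rw [← pow_mul]
  have hm : k * (n + 1) = (k * n + (k - 1)) + 1 := by
    rw [add_assoc, Nat.sub_add_cancel hk, Nat.mul_succ]
  rw [hm, pow_succ]
  field_simp

lemma F_hasSum {t : ℝ} (ht : t ∈ Ioo (0:ℝ) 1) :
    HasSum (fun n : ℕ => t ^ n * (1 - t) ^ (n + 1) / (n + 1))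
      (-Real.log (1 - t * (1 - t)) / t) := by
  obtain ⟨ht0, ht1⟩ := ht
  have hx : |t * (1 - t)| < 1 := by
    rw [abs_of_nonneg (by nlinarith)]; nlinarith
  have h := (hasSum_pow_div_log_of_abs_lt_one hx).div_const t
  convert h using 2 with n
  · rfl
  rw [mul_pow, pow_succ]
  field_simp
  ring

lemma log_identity {t : ℝ} (ht : t ∈ Ioo (0:ℝ) 1) :
    -Real.log (1 - t * (1 - t)) / t =
      (-Real.log (1 - t ^ 1) + Real.log (1 - t ^ 2) + Real.log (1 - t ^ 3)
        - Real.log (1 - t ^ 6)) / t := by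
  obtain ⟨ht0, ht1⟩ := ht
  have h1 : (0:ℝ) < 1 - t := by linarith
  have p1 : (0:ℝ) < 1 - t ^ 1 := by simpa using h1
  have p2 : (0:ℝ) < 1 - t ^ 2 := sub_pos.mpr (pow_lt_one₀ ht0.le ht1 two_ne_zero)
  have p3 : (0:ℝ) < 1 - t ^ 3 := sub_pos.mpr (pow_lt_one₀ ht0.le ht1 three_ne_zero)
  have p6 : (0:ℝ) < 1 - t ^ 6 := sub_pos.mpr (pow_lt_one₀ ht0.le ht1 (by norm_num))
  have pm : (0:ℝ) < 1 - t * (1 - t) := by nlinarith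
  have key : (1 - t ^ 2) * (1 - t ^ 3) * (1 - t * (1 - t)) = (1 - t ^ 1) * (1 - t ^ 6) := by ring
  have hlog : Real.log (1 - t ^ 2) + Real.log (1 - t ^ 3) + Real.log (1 - t * (1 - t)) =
      Real.log (1 - t ^ 1) + Real.log (1 - t ^ 6) := by
    rw [← Real.log_mul (by positivity) (by positivity), ← Real.log_mul (by positivity) (by positivity),
      ← Real.log_mul (by positivity) (by positivity), key]
  have : -Real.log (1 - t * (1 - t)) =
      -Real.log (1 - t ^ 1) + Real.log (1 - t ^ 2) + Real.log (1 - t ^ 3) - Real.log (1 - t ^ 6) := by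
    linarith
  rw [this]

noncomputable def kk : Fin 4 → ℕ := ![1, 2, 3, 6]
noncomputable def ww : Fin 4 → ℝ := ![1, -1, -1, 1]
noncomputable def ff (p : Fin 4 × ℕ) (t : ℝ) : ℝ :=
  ww p.1 * (t ^ (kk p.1 * p.2 + (kk p.1 - 1)) / (p.2 + 1))

lemma kk_pos (i : Fin 4) : 1 ≤ kk i := by fin_cases i <;> simp [kk]
lemma ww_abs (i : Fin 4) : |ww i| = 1 := by fin_cases i <;> simp [ww]

lemma slice_hasSum' (i : Fin 4) {t : ℝ} (ht : t ∈ Ioo (0:ℝ) 1) :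
    HasSum (fun n : ℕ => ff (i, n) t) (ww i * (-Real.log (1 - t ^ (kk i)) / t)) :=
  (slice_hasSum (kk_pos i) ht).mul_left (ww i)

lemma abs_slice_summable (i : Fin 4) {t : ℝ} (ht : t ∈ Ioo (0:ℝ) 1) :
    Summable (fun n : ℕ => |ff (i, n) t|) := by
  apply ((slice_hasSum (kk_pos i) ht).summable).congr
  intro n
  have ht0 := ht.1
  rw [ff, abs_mul, ww_abs, one_mul, abs_of_nonneg (by positivity)]

lemma total_summable {t : ℝ} (ht : t ∈ Ioo (0:ℝ) 1) :
    Summable (fun p : Fin 4 × ℕ => ff p t) := by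
  apply Summable.of_abs
  rw [summable_prod_of_nonneg (fun p => abs_nonneg _)]
  exact ⟨fun i => abs_slice_summable i ht, Summable.of_finite⟩

lemma pointwise_eq {t : ℝ} (ht : t ∈ Ioo (0:ℝ) 1) :
    ∑' n : ℕ, t ^ n * (1 - t) ^ (n + 1) / (n + 1) = ∑' p : Fin 4 × ℕ, ff p t := by
  have h1 := (total_summable ht).hasSum
  have h2 := h1.prod_fiberwise (fun i => slice_hasSum' i ht)
  have h3 := hasSum_fintype (fun i => ww i * (-Real.log (1 - t ^ (kk i)) / t))
  have h4 : ∑' p : Fin 4 × ℕ, ff p t =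
      ∑ i : Fin 4, ww i * (-Real.log (1 - t ^ (kk i)) / t) := h2.unique h3
  rw [h4, (F_hasSum ht).tsum_eq, log_identity ht]
  simp only [Fin.sum_univ_four]
  simp only [kk, ww, Matrix.cons_val]
  norm_num
  ring

lemma exp_succ (i : Fin 4) (n : ℕ) : kk i * n + (kk i - 1) + 1 = kk i * (n + 1) := by
  have := kk_pos i
  rw [add_assoc, Nat.sub_add_cancel this, Nat.mul_succ]

lemma int_ff (i : Fin 4) (n : ℕ) :
    ∫ t in Ioo (0:ℝ) 1, ff (i, n) t = ww i * (1 / (kk i * ((n:ℝ) + 1) ^ 2)) := by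
  simp only [ff]
  rw [integral_const_mul, integral_div, mono_int]
  have hcast : ((kk i * n + (kk i - 1) : ℕ) : ℝ) + 1 = (kk i : ℝ) * ((n:ℝ) + 1) := by
    rw [show ((kk i * n + (kk i - 1) : ℕ) : ℝ) + 1 = ((kk i * n + (kk i - 1) + 1 : ℕ) : ℝ) by push_cast; ring,
      exp_succ]
    push_cast; ring
  rw [hcast]
  have h1 : (0:ℝ) < kk i := by exact_mod_cast kk_pos i
  have h2 : (0:ℝ) < (n:ℝ) + 1 := by positivity
  have h3 : 1 / ((kk i : ℝ) * ((n:ℝ) + 1)) / ((n:ℝ) + 1) = 1 / ((kk i : ℝ) * ((n:ℝ) + 1) ^ 2) := by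
    field_simp
  rw [h3]

lemma ff_integrable (p : Fin 4 × ℕ) :
    MeasureTheory.IntegrableOn (ff p) (Ioo (0:ℝ) 1) := by
  have hc : Continuous (ff p) := by
    unfold ff
    fun_prop
  exact hc.integrableOn_Icc.mono_set Ioo_subset_Icc_self

lemma int_norm_ff (i : Fin 4) (n : ℕ) :
    ∫ t in Ioo (0:ℝ) 1, ‖ff (i, n) t‖ = 1 / (kk i * ((n:ℝ) + 1) ^ 2) := by
  have : ∫ t in Ioo (0:ℝ) 1, ‖ff (i, n) t‖ =
      ∫ t in Ioo (0:ℝ) 1, t ^ (kk i * n + (kk i - 1)) / (n + 1) := by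
    apply setIntegral_congr_fun measurableSet_Ioo
    intro t ht
    have ht0 := ht.1
    simp only [Real.norm_eq_abs, ff]
    rw [abs_mul, ww_abs, one_mul, abs_of_nonneg (by positivity)]
  rw [this, integral_div, mono_int]
  have hcast : ((kk i * n + (kk i - 1) : ℕ) : ℝ) + 1 = (kk i : ℝ) * ((n:ℝ) + 1) := by
    rw [show ((kk i * n + (kk i - 1) : ℕ) : ℝ) + 1 = ((kk i * n + (kk i - 1) + 1 : ℕ) : ℝ) by push_cast; ring,
      exp_succ]
    push_cast; ring
  rw [hcast]
  have h1 : (0:ℝ) < kk i := by exact_mod_cast kk_pos i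
  have h2 : (0:ℝ) < (n:ℝ) + 1 := by positivity
  field_simp

lemma zeta_shift : HasSum (fun n : ℕ => 1 / ((n:ℝ) + 1) ^ 2) (Real.pi ^ 2 / 6) := by
  have h := (hasSum_nat_add_iff' (f := fun n : ℕ => 1 / (n:ℝ) ^ 2) 1).mpr hasSum_zeta_two
  simp only [Finset.range_one, Finset.sum_singleton, Nat.cast_zero] at h
  norm_num at h
  convert h using 2 with n
  · rfl
  push_cast
  ring_nf

lemma F_integrable (n : ℕ) :
    MeasureTheory.IntegrableOn (fun t : ℝ => t ^ n * (1 - t) ^ (n + 1) / ((n:ℝ) + 1))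
      (Ioo (0:ℝ) 1) := by
  have hc : Continuous (fun t : ℝ => t ^ n * (1 - t) ^ (n + 1) / ((n:ℝ) + 1)) := by fun_prop
  exact hc.integrableOn_Icc.mono_set Ioo_subset_Icc_self

lemma int_F (n : ℕ) :
    ∫ t in Ioo (0:ℝ) 1, t ^ n * (1 - t) ^ (n + 1) / ((n:ℝ) + 1) =
      (1 : ℝ) / (((n:ℝ) + 1) ^ 2 * (Nat.choose (2 * (n + 1)) (n + 1))) := by
  rw [integral_div, ← integral_Ioc_eq_integral_Ioo,
    ← intervalIntegral.integral_of_le (by norm_num : (0:ℝ) ≤ 1), beta_nat]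
  have hc := Nat.choose_mul_factorial_mul_factorial (show n + 1 ≤ 2 * (n + 1) by omega)
  rw [show 2 * (n + 1) - (n + 1) = n + 1 by omega] at hc
  have hidx : n + (n + 1) + 1 = 2 * (n + 1) := by omega
  rw [hidx]
  have hcr : ((Nat.choose (2 * (n + 1)) (n + 1) : ℝ)) * (n + 1).factorial * (n + 1).factorial =
      ((2 * (n + 1)).factorial : ℝ) := by exact_mod_cast congrArg (Nat.cast (R := ℝ)) hc
  have hfs : ((n + 1).factorial : ℝ) = ((n:ℝ) + 1) * (n.factorial : ℝ) := by
    rw [Nat.factorial_succ]; push_cast; ring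
  have h1 : (0:ℝ) < n.factorial := by exact_mod_cast n.factorial_pos
  have h2 : (0:ℝ) < (2 * (n + 1)).factorial := by exact_mod_cast (2 * (n + 1)).factorial_pos
  have h3 : (0:ℝ) < Nat.choose (2 * (n + 1)) (n + 1) := by
    exact_mod_cast Nat.choose_pos (show n + 1 ≤ 2 * (n + 1) by omega)
  have h4 : (0:ℝ) < (n:ℝ) + 1 := by positivity
  rw [hfs] at hcr ⊢
  field_simp
  nlinarith [hcr, mul_pos h1 h4, mul_pos h3 (mul_pos h4 h1)]

lemma int_norm_F (n : ℕ) :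
    ∫ t in Ioo (0:ℝ) 1, ‖t ^ n * (1 - t) ^ (n + 1) / ((n:ℝ) + 1)‖ =
      (1 : ℝ) / (((n:ℝ) + 1) ^ 2 * (Nat.choose (2 * (n + 1)) (n + 1))) := by
  rw [← int_F]
  apply setIntegral_congr_fun measurableSet_Ioo
  intro t ht
  obtain ⟨ht0, ht1⟩ := ht
  have h1 : (0:ℝ) ≤ 1 - t := by linarith
  simp only [Real.norm_eq_abs]
  rw [abs_of_nonneg (by positivity)]

theorem stmt_0 :
    ∑' n : ℕ, (1 : ℝ) / ((n + 1) ^ 2 * (Nat.choose (2 * (n + 1)) (n + 1))) =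
      Real.pi ^ 2 / 18 := by
  have hFsumnorm : Summable (fun n : ℕ =>
      ∫ t in Ioo (0:ℝ) 1, ‖t ^ n * (1 - t) ^ (n + 1) / ((n:ℝ) + 1)‖) := by
    apply Summable.of_nonneg_of_le (fun n => ?_) (fun n => ?_) zeta_shift.summable
    · positivity
    · rw [int_norm_F]
      have h3 : (1:ℝ) ≤ Nat.choose (2 * (n + 1)) (n + 1) := by
        exact_mod_cast Nat.one_le_iff_ne_zero.mpr
          (Nat.choose_pos (show n + 1 ≤ 2 * (n + 1) by omega)).ne'
      have h4 : (0:ℝ) < ((n:ℝ) + 1) ^ 2 := by positivity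
      rw [div_le_div_iff₀ (by nlinarith) (by positivity)]
      nlinarith
  have H1 := MeasureTheory.hasSum_integral_of_summable_integral_norm
      (μ := MeasureTheory.volume.restrict (Ioo (0:ℝ) 1)) F_integrable hFsumnorm
  have hffnorm : Summable (fun p : Fin 4 × ℕ => ∫ t in Ioo (0:ℝ) 1, ‖ff p t‖) := by
    have : (fun p : Fin 4 × ℕ => ∫ t in Ioo (0:ℝ) 1, ‖ff p t‖) =
        fun p => 1 / ((kk p.1 : ℝ) * ((p.2:ℝ) + 1) ^ 2) := by
      ext ⟨i, n⟩; exact int_norm_ff i n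
    rw [this]
    rw [summable_prod_of_nonneg (fun p => by positivity)]
    constructor
    · intro i
      apply (zeta_shift.summable.mul_left (1 / (kk i : ℝ))).congr
      intro n
      have h1 : (0:ℝ) < kk i := by exact_mod_cast kk_pos i
      field_simp
    · exact Summable.of_finite
  have H2 := MeasureTheory.hasSum_integral_of_summable_integral_norm
      (μ := MeasureTheory.volume.restrict (Ioo (0:ℝ) 1)) ff_integrable hffnorm
  have fib : ∀ i : Fin 4, HasSum (fun n : ℕ => ∫ t in Ioo (0:ℝ) 1, ff (i, n) t)
      (ww i * (1 / (kk i : ℝ)) * (Real.pi ^ 2 / 6)) := by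
    intro i
    have h1 : (0:ℝ) < kk i := by exact_mod_cast kk_pos i
    have he : (fun n : ℕ => ∫ t in Ioo (0:ℝ) 1, ff (i, n) t) =
        fun n : ℕ => ww i * (1 / (kk i : ℝ)) * (1 / ((n:ℝ) + 1) ^ 2) := by
      ext n
      rw [int_ff]
      field_simp
    rw [he]
    exact zeta_shift.mul_left _
  have H5 := H2.prod_fiberwise fib
  have H6 : (∫ t in Ioo (0:ℝ) 1, ∑' p : Fin 4 × ℕ, ff p t) =
      ∑ i : Fin 4, ww i * (1 / (kk i : ℝ)) * (Real.pi ^ 2 / 6) :=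
    H5.unique (hasSum_fintype _)
  have H3 : (∫ t in Ioo (0:ℝ) 1, ∑' n : ℕ, t ^ n * (1 - t) ^ (n + 1) / ((n:ℝ) + 1)) =
      ∫ t in Ioo (0:ℝ) 1, ∑' p : Fin 4 × ℕ, ff p t := by
    apply setIntegral_congr_fun measurableSet_Ioo
    intro t ht
    exact pointwise_eq ht
  calc ∑' n : ℕ, (1 : ℝ) / ((n + 1) ^ 2 * (Nat.choose (2 * (n + 1)) (n + 1)))
      = ∑' n : ℕ, ∫ t in Ioo (0:ℝ) 1, t ^ n * (1 - t) ^ (n + 1) / ((n:ℝ) + 1) := by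
        apply tsum_congr; intro n; rw [int_F]
    _ = ∫ t in Ioo (0:ℝ) 1, ∑' n : ℕ, t ^ n * (1 - t) ^ (n + 1) / ((n:ℝ) + 1) := H1.tsum_eq
    _ = ∑ i : Fin 4, ww i * (1 / (kk i : ℝ)) * (Real.pi ^ 2 / 6) := by rw [H3, H6]
    _ = Real.pi ^ 2 / 18 := by
        simp only [Fin.sum_univ_four, kk, ww, Matrix.cons_val]
        norm_num
        ring
end

section
/- For all x with |x| ≤ 1, arcsin(x)² = (1/2) · ∑_{n≥0} 4^{n+1} · x^{2n+2} / ((2n+2)(2n+1) · binom(2n, n)). -/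
open Real
open scoped Topology

noncomputable def myc (n : ℕ) : ℝ := 4 ^ n / ((2 * n + 1) * Nat.centralBinom n)

noncomputable def myA (n : ℕ) : ℝ :=
  4 ^ (n + 1) / ((2 * n + 2) * ((2 * n + 1) * Nat.centralBinom n))

lemma cb_pos (n : ℕ) : (0 : ℝ) < Nat.centralBinom n := by
  exact_mod_cast Nat.centralBinom_pos n

lemma myc_pos (n : ℕ) : 0 < myc n := by
  apply div_pos (by positivity)
  have := cb_pos n
  positivity

lemma four_pow_le_nat (n : ℕ) : 4 ^ n ≤ (2 * n + 1) * Nat.centralBinom n := by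
  cases n with
  | zero => simp
  | succ m =>
    calc 4 ^ (m + 1) ≤ 2 * (m + 1) * Nat.centralBinom (m + 1) :=
          Nat.four_pow_le_two_mul_self_mul_centralBinom (m + 1) (Nat.succ_pos m)
      _ ≤ (2 * (m + 1) + 1) * Nat.centralBinom (m + 1) :=
          Nat.mul_le_mul_right _ (Nat.le_succ _)

lemma myc_le_one (n : ℕ) : myc n ≤ 1 := by
  rw [myc, div_le_one (by have := cb_pos n; positivity)]
  have := four_pow_le_nat n
  exact_mod_cast this

lemma c_rec (n : ℕ) : (2 * (n : ℝ) + 3) * myc (n + 1) = (2 * n + 2) * myc n := by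
  have h := Nat.succ_mul_centralBinom_succ n
  have h' : ((n : ℝ) + 1) * Nat.centralBinom (n + 1) = 2 * (2 * n + 1) * Nat.centralBinom n := by
    exact_mod_cast h
  have h1 : ((Nat.centralBinom (n + 1) : ℝ)) ≠ 0 := (cb_pos _).ne'
  have h2 : ((Nat.centralBinom n : ℝ)) ≠ 0 := (cb_pos _).ne'
  rw [myc, myc]
  push_cast
  field_simp
  have hne : ((n:ℝ) + 1) ≠ 0 := by positivity
  apply mul_left_cancel₀ hne
  linear_combination (-2 * ((n:ℝ) + 1) * (2 * (n:ℝ) + 3) * 4 ^ n) * h'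

lemma summable_bound {r : ℝ} (hr : |r| < 1) :
    Summable (fun n : ℕ => (2 * (n : ℝ) + 4) * (r ^ 2) ^ n) := by
  have h2 : ‖r ^ 2‖ < 1 := by
    rw [Real.norm_eq_abs, abs_pow]
    calc |r| ^ 2 ≤ |r| * 1 := by nlinarith [abs_nonneg r]
      _ < 1 := by simpa using hr
  have t1 := summable_pow_mul_geometric_of_norm_lt_one (R := ℝ) 1 h2
  have t0 := summable_geometric_of_norm_lt_one h2
  exact ((t1.mul_left 2).add (t0.mul_left 4)).congr fun n => by push_cast; ring

lemma summable_of_le {f : ℕ → ℝ} {r : ℝ} (hr : |r| < 1)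
    (h : ∀ n, |f n| ≤ (2 * (n : ℝ) + 4) * (r ^ 2) ^ n) : Summable f :=
  Summable.of_norm_bounded (summable_bound hr) fun n => by
    simpa [Real.norm_eq_abs] using h n

lemma keyNat (n : ℕ) : 16 ^ (n + 1) ≤ 4 * (n + 1) * Nat.centralBinom (n + 1) ^ 2 := by
  induction n with
  | zero => decide
  | succ m ih =>
    have h := Nat.succ_mul_centralBinom_succ (m + 1)
    have key : (m + 2) ^ 2 * (16 ^ (m + 2)) ≤ (m + 2) ^ 2 * (4 * (m + 2) * Nat.centralBinom (m + 2) ^ 2) := by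
      have h2 : (m + 2) ^ 2 * (4 * (m + 2) * Nat.centralBinom (m + 2) ^ 2)
          = 4 * (m + 2) * ((m + 2) * Nat.centralBinom (m + 2)) ^ 2 := by ring
      rw [h2, h]
      calc (m + 2) ^ 2 * 16 ^ (m + 2) = 16 * (m+2)^2 * 16 ^ (m + 1) := by ring
        _ ≤ 16 * (m+2)^2 * (4 * (m + 1) * Nat.centralBinom (m + 1) ^ 2) :=
            Nat.mul_le_mul_left _ ih
        _ ≤ 4 * (m + 2) * (2 * (2 * (m + 1) + 1) * Nat.centralBinom (m + 1)) ^ 2 := by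
            nlinarith [Nat.centralBinom_pos (m+1)]
    exact Nat.le_of_mul_le_mul_left key (by positivity)

lemma four_pow_le_sqrt (m : ℕ) : (4 : ℝ) ^ (m + 1) ≤ 2 * Real.sqrt (m + 1) * Nat.centralBinom (m + 1) := by
  have hk : (16 : ℝ) ^ (m + 1) ≤ 4 * (m + 1) * Nat.centralBinom (m + 1) ^ 2 := by
    exact_mod_cast keyNat m
  have h1 : (4 : ℝ) ^ (m + 1) = Real.sqrt ((16 : ℝ) ^ (m + 1)) := by
    rw [show (16 : ℝ) ^ (m + 1) = ((4 : ℝ) ^ (m + 1)) ^ 2 by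
      rw [show (16:ℝ) = 4 ^ 2 by norm_num, ← pow_mul, mul_comm, pow_mul], Real.sqrt_sq (by positivity)]
  rw [h1]
  calc Real.sqrt ((16 : ℝ) ^ (m + 1)) ≤ Real.sqrt (4 * (m + 1) * Nat.centralBinom (m + 1) ^ 2) :=
        Real.sqrt_le_sqrt hk
    _ = 2 * Real.sqrt (m + 1) * Nat.centralBinom (m + 1) := by
        rw [show (4 : ℝ) * (m + 1) * Nat.centralBinom (m + 1) ^ 2
            = (2 * Real.sqrt ((m:ℝ) + 1) * Nat.centralBinom (m + 1)) ^ 2 by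
          rw [mul_pow, mul_pow, Real.sq_sqrt (by positivity)]; ring]
        exact Real.sqrt_sq (by positivity)

lemma myA_pos (n : ℕ) : 0 < myA n := by
  have := cb_pos n; unfold myA; positivity

lemma myA_le_two (n : ℕ) : myA n ≤ 2 := by
  have h1 : myA n = 4 * myc n / (2 * n + 2) := by
    unfold myA myc; field_simp; ring
  rw [h1, div_le_iff₀ (by positivity)]
  nlinarith [myc_le_one n, myc_pos n]

lemma myA_le (m : ℕ) : myA (m + 1) ≤ 2 * (((m + 1 : ℕ) : ℝ) ^ ((3 : ℝ) / 2))⁻¹ := by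
  have hs := four_pow_le_sqrt m
  have hcb := cb_pos (m + 1)
  have hm : (0 : ℝ) < (m : ℝ) + 1 := by positivity
  have step1 : myA (m + 1) ≤ 8 * Real.sqrt (m + 1) / ((2 * (m + 1 : ℕ) + 2) * (2 * (m + 1 : ℕ) + 1)) := by
    unfold myA
    rw [div_le_div_iff₀ (by positivity) (by positivity)]
    have hsq : (0 : ℝ) ≤ Real.sqrt ((m : ℝ) + 1) := Real.sqrt_nonneg _
    push_cast
    push_cast at hs
    have hP : (0:ℝ) ≤ (2 * ((m:ℝ) + 1) + 2) * (2 * ((m:ℝ) + 1) + 1) := by positivity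
    nlinarith [mul_le_mul_of_nonneg_right hs hP, hcb, Real.sqrt_nonneg ((m:ℝ)+1), pow_succ (4:ℝ) (m+1)]
  refine step1.trans ?_
  have hrp : ((m + 1 : ℕ) : ℝ) ^ ((3 : ℝ) / 2) * Real.sqrt (m + 1) = ((m : ℝ) + 1) ^ 2 := by
    push_cast
    rw [Real.sqrt_eq_rpow, ← Real.rpow_add hm]
    norm_num
  rw [← div_eq_mul_inv, div_le_div_iff₀ (by positivity) (by positivity)]
  push_cast
  push_cast at hrp
  nlinarith [hrp, Real.sqrt_nonneg ((m:ℝ)+1), hm]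

lemma summable_myA : Summable myA := by
  rw [← summable_nat_add_iff 1]
  have hb : Summable (fun n : ℕ => 2 * (((n + 1 : ℕ) : ℝ) ^ ((3 : ℝ) / 2))⁻¹) := by
    apply Summable.mul_left
    have base : Summable (fun n : ℕ => (((n : ℕ) : ℝ) ^ ((3 : ℝ) / 2))⁻¹) := by
      simpa [one_div] using Real.summable_one_div_nat_rpow.mpr (by norm_num : (1:ℝ) < 3/2)
    exact (summable_nat_add_iff 1).mpr base
  exact Summable.of_nonneg_of_le (fun n => (myA_pos _).le) (fun n => myA_le n) hb

lemma myc_zero : myc 0 = 1 := by norm_num [myc, Nat.centralBinom]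

lemma myA_mul (n : ℕ) : (2 * (n : ℝ) + 2) * myA n = 4 * myc n := by
  have h2 := (cb_pos n).ne'
  rw [myA, myc]
  field_simp
  ring

noncomputable def U (x : ℝ) : ℝ := ∑' n : ℕ, myc n * x ^ (2 * n + 1)
noncomputable def V (x : ℝ) : ℝ := ∑' n : ℕ, myc n * ((2 * (n : ℝ) + 1) * x ^ (2 * n))
noncomputable def G (x : ℝ) : ℝ := ∑' n : ℕ, myA n * x ^ (2 * n + 2)

lemma abs_sq_pow (x : ℝ) (n : ℕ) : |x| ^ (2 * n) = (x ^ 2) ^ n := by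
  rw [pow_mul, sq_abs]

lemma pow_sq_le {x : ℝ} (hx : |x| ≤ 1) (n k : ℕ) : |x ^ (2 * n + k)| ≤ (x ^ 2) ^ n := by
  rw [abs_pow, pow_add, ← abs_sq_pow]
  have h1 : |x| ^ k ≤ 1 := pow_le_one₀ (abs_nonneg x) hx
  have h2 : (0:ℝ) ≤ |x| ^ (2*n) := by positivity
  nlinarith


lemma bound_helper {c t s b B : ℝ} (hc1 : c ≤ 1) (ht : 0 ≤ t) (hts : t ≤ s)
    (hb0 : 0 ≤ b) (hbB : b ≤ B) : c * (b * t) ≤ B * s := by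
  have h1 : c * (b * t) ≤ 1 * (b * t) := by
    apply mul_le_mul_of_nonneg_right hc1 (by positivity)
  have h2 : b * t ≤ B * s := mul_le_mul hbB hts ht (le_trans hb0 hbB)
  linarith

lemma nat_ge (n : ℕ) : (0:ℝ) ≤ (n:ℝ) := Nat.cast_nonneg n

lemma bound_helper' {c t s : ℝ} (hc1 : c ≤ 1) (hc0 : 0 ≤ c) (ht : 0 ≤ t) (hts : t ≤ s)
    {B : ℝ} (hB : 1 ≤ B) : c * t ≤ B * s := by
  have h0 : 0 ≤ s := le_trans ht hts
  nlinarith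

lemma sumU {x : ℝ} (hx : |x| < 1) : Summable (fun n : ℕ => myc n * x ^ (2 * n + 1)) := by
  refine summable_of_le hx fun n => ?_
  rw [abs_mul, abs_of_pos (myc_pos n)]
  exact bound_helper' (myc_le_one n) (myc_pos n).le (abs_nonneg _) (pow_sq_le hx.le n 1)
    (by nlinarith [nat_ge n])

lemma sumV {x : ℝ} (hx : |x| < 1) :
    Summable (fun n : ℕ => myc n * ((2 * (n : ℝ) + 1) * x ^ (2 * n))) := by
  refine summable_of_le hx fun n => ?_
  rw [abs_mul, abs_of_pos (myc_pos n), abs_mul, abs_of_pos (by positivity : (0:ℝ) < 2 * n + 1)]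
  have h1 := pow_sq_le hx.le n 0
  simp only [add_zero] at h1
  exact bound_helper (myc_le_one n) (abs_nonneg _) h1 (by positivity)
    (by nlinarith [nat_ge n])

lemma sumV2 {x : ℝ} (hx : |x| < 1) :
    Summable (fun n : ℕ => myc n * ((2 * (n : ℝ) + 1) * x ^ (2 * n + 2))) := by
  refine summable_of_le hx fun n => ?_
  rw [abs_mul, abs_of_pos (myc_pos n), abs_mul, abs_of_pos (by positivity : (0:ℝ) < 2 * n + 1)]
  exact bound_helper (myc_le_one n) (abs_nonneg _) (pow_sq_le hx.le n 2) (by positivity)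
    (by nlinarith [nat_ge n])

lemma sumUx {x : ℝ} (hx : |x| < 1) : Summable (fun n : ℕ => myc n * x ^ (2 * n + 2)) := by
  refine summable_of_le hx fun n => ?_
  rw [abs_mul, abs_of_pos (myc_pos n)]
  exact bound_helper' (myc_le_one n) (myc_pos n).le (abs_nonneg _) (pow_sq_le hx.le n 2)
    (by nlinarith [nat_ge n])

lemma sumW {x : ℝ} (hx : |x| < 1) :
    Summable (fun n : ℕ => (2 * (n : ℝ) + 2) * myc n * x ^ (2 * n + 2)) := by
  refine summable_of_le hx fun n => ?_
  rw [abs_mul, abs_mul, abs_of_pos (by positivity : (0:ℝ) < 2 * n + 2),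
    abs_of_pos (myc_pos n)]
  have h := bound_helper (myc_le_one n) (abs_nonneg (x ^ (2*n+2)))
    (pow_sq_le hx.le n 2) (by positivity : (0:ℝ) ≤ 2 * (n:ℝ) + 2)
    (by nlinarith [nat_ge n] : 2 * (n:ℝ) + 2 ≤ 2 * (n:ℝ) + 4)
  nlinarith [h]

lemma hasDerivAt_U {x : ℝ} (hx : |x| < 1) : HasDerivAt U (V x) x := by
  set r : ℝ := (|x| + 1) / 2 with hrdef
  have hr0 : 0 < r := by positivity
  have hr1 : |r| < 1 := by rw [abs_of_pos hr0]; simp only [hrdef]; linarith [abs_nonneg x]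
  have hxr : |x| < r := by simp only [hrdef]; linarith
  have hmem : x ∈ Set.Ioo (-r) r := by constructor <;> [linarith [neg_abs_le x]; linarith [le_abs_self x]]
  have h0 : (0:ℝ) ∈ Set.Ioo (-r) r := by constructor <;> linarith
  have key := hasDerivAt_tsum_of_isPreconnected (summable_bound hr1)
    (isOpen_Ioo (a := -r) (b := r)) (convex_Ioo (-r) r).isPreconnected
    (g := fun n y => myc n * y ^ (2 * n + 1))
    (g' := fun n y => myc n * ((2 * (n : ℝ) + 1) * y ^ (2 * n)))
    (fun n y _ => by
      have := (hasDerivAt_pow (2 * n + 1) y).const_mul (myc n)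
      refine this.congr_deriv ?_
      push_cast [Nat.add_sub_cancel]
      ring)
    (fun n y hy => ?_) h0 ?_ hmem
  · exact key
  · have hy' : |y| ≤ r := le_of_lt (abs_lt.mpr ⟨hy.1, hy.2⟩)
    have h1 : |y ^ (2 * n)| ≤ (r ^ 2) ^ n := by
      calc |y ^ (2 * n)| = |y| ^ (2 * n) := abs_pow y _
        _ ≤ r ^ (2 * n) := pow_le_pow_left₀ (abs_nonneg y) hy' _
        _ = (r ^ 2) ^ n := by rw [pow_mul]
    rw [Real.norm_eq_abs, abs_mul, abs_of_pos (myc_pos n), abs_mul,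
      abs_of_pos (by positivity : (0:ℝ) < 2 * n + 1)]
    exact bound_helper (myc_le_one n) (abs_nonneg _) h1 (by positivity)
      (by nlinarith [nat_ge n])
  · exact (summable_zero).congr fun n => by simp

lemma hasDerivAt_G {x : ℝ} (hx : |x| < 1) : HasDerivAt G (4 * U x) x := by
  set r : ℝ := (|x| + 1) / 2 with hrdef
  have hr0 : 0 < r := by positivity
  have hr1 : |r| < 1 := by rw [abs_of_pos hr0]; simp only [hrdef]; linarith [abs_nonneg x]
  have hxr : |x| < r := by simp only [hrdef]; linarith
  have hmem : x ∈ Set.Ioo (-r) r := by constructor <;> [linarith [neg_abs_le x]; linarith [le_abs_self x]]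
  have h0 : (0:ℝ) ∈ Set.Ioo (-r) r := by constructor <;> linarith
  have key := hasDerivAt_tsum_of_isPreconnected (summable_bound hr1)
    (isOpen_Ioo (a := -r) (b := r)) (convex_Ioo (-r) r).isPreconnected
    (g := fun n y => myA n * y ^ (2 * n + 2))
    (g' := fun n y => myA n * ((2 * (n : ℝ) + 2) * y ^ (2 * n + 1)))
    (fun n y _ => by
      have := (hasDerivAt_pow (2 * n + 2) y).const_mul (myA n)
      refine this.congr_deriv ?_
      push_cast [Nat.add_sub_cancel]
      ring)
    (fun n y hy => ?_) h0 ?_ hmem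
  · have hG : HasDerivAt G (∑' n : ℕ, myA n * ((2 * (n : ℝ) + 2) * x ^ (2 * n + 1))) x := by
      exact key
    have heq : (∑' n : ℕ, myA n * ((2 * (n : ℝ) + 2) * x ^ (2 * n + 1)))
        = 4 * U x := by
      rw [U, ← tsum_mul_left]
      exact tsum_congr fun n => by
        linear_combination x ^ (2 * n + 1) * myA_mul n
    rwa [heq] at hG
  · have hy' : |y| ≤ r := le_of_lt (abs_lt.mpr ⟨hy.1, hy.2⟩)
    have hr_le1 : r ≤ 1 := by rw [abs_of_pos hr0] at hr1; exact hr1.le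
    have h1 : |y ^ (2 * n + 1)| ≤ (r ^ 2) ^ n := by
      calc |y ^ (2 * n + 1)| = |y| ^ (2 * n) * |y| := by rw [abs_pow, pow_succ]
        _ ≤ r ^ (2 * n) * r :=
            mul_le_mul (pow_le_pow_left₀ (abs_nonneg y) hy' _) hy' (abs_nonneg y) (by positivity)
        _ ≤ r ^ (2 * n) * 1 := by nlinarith [pow_nonneg hr0.le (2*n)]
        _ = (r ^ 2) ^ n := by rw [mul_one, pow_mul]
    rw [Real.norm_eq_abs, abs_mul, abs_of_pos (myA_pos n), abs_mul,
      abs_of_pos (by positivity : (0:ℝ) < 2 * n + 2)]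
    have hA2 : (2 * (n:ℝ) + 2) * myA n ≤ 4 := by
      rw [myA_mul n]; nlinarith [myc_le_one n]
    have h2 : (0:ℝ) ≤ (r^2)^n := by positivity
    nlinarith [abs_nonneg (y ^ (2*n+1)), myA_pos n, h1, hA2,
      mul_le_mul hA2 h1 (abs_nonneg (y ^ (2*n+1))) (by norm_num : (0:ℝ) ≤ 4)]
  · exact (summable_zero).congr fun n => by simp

lemma V_eq {x : ℝ} (hx : |x| < 1) : (1 - x ^ 2) * V x = x * U x + 1 := by
  have sV := sumV hx
  have sV2 := sumV2 hx
  have sUx := sumUx hx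
  have sW := sumW hx
  have hx2 : x ^ 2 * V x = ∑' n : ℕ, myc n * ((2 * (n : ℝ) + 1) * x ^ (2 * n + 2)) := by
    rw [V, ← tsum_mul_left]
    exact tsum_congr fun n => by ring
  have hV : V x = 1 + ∑' n : ℕ, (2 * (n : ℝ) + 2) * myc n * x ^ (2 * n + 2) := by
    rw [V, sV.tsum_eq_zero_add]
    congr 1
    · simp [myc_zero]
    · exact tsum_congr fun n => by
        push_cast
        linear_combination x ^ (2 * n + 2) * c_rec n
  have hxU : x * U x = ∑' n : ℕ, myc n * x ^ (2 * n + 2) := by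
    rw [U, ← tsum_mul_left]
    exact tsum_congr fun n => by ring
  have key : (∑' n : ℕ, (2 * (n : ℝ) + 2) * myc n * x ^ (2 * n + 2))
      - (∑' n : ℕ, myc n * ((2 * (n : ℝ) + 1) * x ^ (2 * n + 2)))
      = ∑' n : ℕ, myc n * x ^ (2 * n + 2) := by
    rw [← Summable.tsum_sub sW sV2]
    exact tsum_congr fun n => by ring
  calc (1 - x ^ 2) * V x = V x - x ^ 2 * V x := by ring
    _ = x * U x + 1 := by rw [hx2, hV, hxU]; linarith [key]

lemma const_of_deriv_zero {f : ℝ → ℝ} (h : ∀ y ∈ Set.Ioo (-1 : ℝ) 1, HasDerivAt f 0 y)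
    {x : ℝ} (hx : x ∈ Set.Ioo (-1 : ℝ) 1) : f x = f 0 := by
  have h0 : (0 : ℝ) ∈ Set.Ioo (-1 : ℝ) 1 := by norm_num
  refine (convex_Ioo (-1 : ℝ) 1).is_const_of_fderivWithin_eq_zero
    (fun y hy => ((h y hy).differentiableAt).differentiableWithinAt) (fun y hy => ?_) hx h0
  rw [fderivWithin_of_isOpen isOpen_Ioo hy]
  have h2 : HasFDerivAt f (0 : ℝ →L[ℝ] ℝ) y := by
    have := (h y hy).hasFDerivAt
    refine this.congr_fderiv ?_
    ext z
    simp
  exact h2.fderiv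

lemma U_zero : U 0 = 0 := by
  rw [U]
  rw [show (∑' n : ℕ, myc n * (0:ℝ) ^ (2 * n + 1)) = ∑' _ : ℕ, (0:ℝ) from
    tsum_congr fun n => by rw [zero_pow (by omega : 2 * n + 1 ≠ 0), mul_zero]]
  exact tsum_zero

lemma G_zero : G 0 = 0 := by
  rw [G]
  rw [show (∑' n : ℕ, myA n * (0:ℝ) ^ (2 * n + 2)) = ∑' _ : ℕ, (0:ℝ) from
    tsum_congr fun n => by rw [zero_pow (by omega : 2 * n + 2 ≠ 0), mul_zero]]
  exact tsum_zero

lemma U_eq {x : ℝ} (hx : x ∈ Set.Ioo (-1 : ℝ) 1) :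
    Real.sqrt (1 - x ^ 2) * U x = Real.arcsin x := by
  have hderiv : ∀ y ∈ Set.Ioo (-1 : ℝ) 1,
      HasDerivAt (fun z => Real.sqrt (1 - z ^ 2) * U z - Real.arcsin z) 0 y := by
    intro y hy
    have hy1 : y ≠ 1 := ne_of_lt hy.2
    have hy2 : y ≠ -1 := ne_of_gt hy.1
    have hyabs : |y| < 1 := abs_lt.mpr ⟨hy.1, hy.2⟩
    have h1y : 0 < 1 - y ^ 2 := by nlinarith [hy.1, hy.2]
    have hs : 0 < Real.sqrt (1 - y ^ 2) := Real.sqrt_pos.mpr h1y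
    have hs2 : Real.sqrt (1 - y ^ 2) ^ 2 = 1 - y ^ 2 := Real.sq_sqrt h1y.le
    have hq : HasDerivAt (fun z : ℝ => 1 - z ^ 2) (-(2 * y)) y := by
      simpa using (hasDerivAt_pow 2 y).const_sub 1
    have hsq : HasDerivAt (fun z => Real.sqrt (1 - z ^ 2))
        (-(2 * y) / (2 * Real.sqrt (1 - y ^ 2))) y := hq.sqrt h1y.ne'
    have hU := hasDerivAt_U hyabs
    have hmul := hsq.mul hU
    have harc := Real.hasDerivAt_arcsin hy2 hy1
    have htot := hmul.sub harc
    have hzero : -(2 * y) / (2 * Real.sqrt (1 - y ^ 2)) * U y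
        + Real.sqrt (1 - y ^ 2) * V y - 1 / Real.sqrt (1 - y ^ 2) = 0 := by
      have hVe := V_eq hyabs
      field_simp
      linear_combination hVe +
        (V y) * hs2
    rwa [hzero] at htot
  have hc := const_of_deriv_zero hderiv hx
  simp only [U_zero, Real.arcsin_zero, mul_zero, sub_zero] at hc
  linarith [hc]

lemma main_lt {x : ℝ} (hx : |x| < 1) : Real.arcsin x ^ 2 = (1 / 2) * G x := by
  have hxIoo : x ∈ Set.Ioo (-1 : ℝ) 1 := ⟨by linarith [neg_abs_le x], by linarith [le_abs_self x]⟩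
  have hderiv : ∀ y ∈ Set.Ioo (-1 : ℝ) 1,
      HasDerivAt (fun z => Real.arcsin z ^ 2 - (1 / 2) * G z) 0 y := by
    intro y hy
    have hy1 : y ≠ 1 := ne_of_lt hy.2
    have hy2 : y ≠ -1 := ne_of_gt hy.1
    have hyabs : |y| < 1 := abs_lt.mpr ⟨hy.1, hy.2⟩
    have h1y : 0 < 1 - y ^ 2 := by nlinarith [hy.1, hy.2]
    have hs : 0 < Real.sqrt (1 - y ^ 2) := Real.sqrt_pos.mpr h1y
    have harc := Real.hasDerivAt_arcsin hy2 hy1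
    have harc2 := harc.pow 2
    have hG := (hasDerivAt_G hyabs).const_mul (1 / 2 : ℝ)
    have htot := harc2.sub hG
    have hzero : (2 : ℕ) * Real.arcsin y ^ (2 - 1) * (1 / Real.sqrt (1 - y ^ 2))
        - (1 / 2 : ℝ) * (4 * U y) = 0 := by
      have hUe := U_eq hy
      push_cast
      field_simp
      linear_combination (-4) * hUe
    rwa [hzero] at htot
  have hc := const_of_deriv_zero hderiv hxIoo
  simp only [G_zero, Real.arcsin_zero, mul_zero, sub_zero] at hc
  have : (0:ℝ) ^ 2 - (1/2) * 0 = 0 := by norm_num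
  nlinarith [hc]


lemma contG : ContinuousOn G (Set.Icc (-1 : ℝ) 1) := by
  have tu := tendstoUniformlyOn_tsum_nat (f := fun n (x : ℝ) => myA n * x ^ (2 * n + 2))
    summable_myA (s := Set.Icc (-1 : ℝ) 1) ?_
  · have : ContinuousOn (fun x : ℝ => ∑' n : ℕ, myA n * x ^ (2 * n + 2))
        (Set.Icc (-1 : ℝ) 1) := by
      refine tu.continuousOn (Filter.Frequently.of_forall fun N => ?_)
      exact (continuous_finset_sum _ fun i _ =>
        continuous_const.mul (continuous_pow (2 * i + 2))).continuousOn
    exact this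
  · intro n x hxm
    have hx1 : |x| ≤ 1 := abs_le.mpr ⟨hxm.1, hxm.2⟩
    rw [Real.norm_eq_abs, abs_mul, abs_of_pos (myA_pos n)]
    have : |x ^ (2 * n + 2)| ≤ 1 := by
      rw [abs_pow]; exact pow_le_one₀ (abs_nonneg x) hx1
    nlinarith [myA_pos n]

lemma G_even (x : ℝ) : G (-x) = G x := by
  rw [G, G]
  exact tsum_congr fun n => by
    congr 1
    exact (Even.neg_pow (⟨n + 1, by ring⟩ : Even (2 * n + 2)) x)

lemma main_one : Real.arcsin 1 ^ 2 = (1 / 2) * G 1 := by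
  set f : ℝ → ℝ := fun y => Real.arcsin y ^ 2 - (1 / 2) * G y with hf
  have hcont : ContinuousOn f (Set.Icc (-1 : ℝ) 1) :=
    ((Real.continuous_arcsin.pow 2).continuousOn).sub (continuousOn_const.mul contG)
  have h1m : (1 : ℝ) ∈ Set.Icc (-1 : ℝ) 1 := by norm_num
  have hne : (𝓝[Set.Ioo (-1 : ℝ) 1] (1 : ℝ)).NeBot := by
    rw [← mem_closure_iff_nhdsWithin_neBot, closure_Ioo (by norm_num : (-1 : ℝ) ≠ 1)]
    exact h1m
  have limit1 : Filter.Tendsto f (𝓝[Set.Ioo (-1 : ℝ) 1] 1) (𝓝 (f 1)) :=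
    (hcont.continuousWithinAt h1m).mono Set.Ioo_subset_Icc_self
  have limit2 : Filter.Tendsto f (𝓝[Set.Ioo (-1 : ℝ) 1] 1) (𝓝 0) := by
    have heq : ∀ y ∈ Set.Ioo (-1 : ℝ) 1, f y = 0 := by
      intro y hy
      have := main_lt (abs_lt.mpr ⟨hy.1, hy.2⟩)
      simp [hf, this]
    refine Filter.Tendsto.congr' ?_ tendsto_const_nhds
    exact Filter.eventuallyEq_of_mem self_mem_nhdsWithin fun y hy => (heq y hy).symm
  have := tendsto_nhds_unique limit1 limit2
  have hf1 : f 1 = 0 := this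
  simp only [hf] at hf1
  linarith

lemma main_le {x : ℝ} (hx : |x| ≤ 1) : Real.arcsin x ^ 2 = (1 / 2) * G x := by
  rcases lt_or_eq_of_le hx with h | h
  · exact main_lt h
  · rcases (abs_eq (by norm_num : (0:ℝ) ≤ 1)).mp h with h1 | h1
    · rw [h1]; exact main_one
    · rw [h1]
      rw [show ((-1:ℝ)) = -(1:ℝ) by norm_num, Real.arcsin_neg, G_even 1]
      calc (-Real.arcsin 1) ^ 2 = Real.arcsin 1 ^ 2 := by ring
        _ = (1/2) * G 1 := main_one

theorem stmt_1 (x : ℝ) (hx : |x| ≤ 1) :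
    Real.arcsin x ^ 2 =
      (1 / 2) * ∑' n : ℕ,
        (4 : ℝ) ^ (n + 1) * x ^ (2 * n + 2) /
          ((2 * n + 2) * (2 * n + 1) * (Nat.choose (2 * n) n)) := by
  rw [main_le hx, G]
  congr 1
  refine tsum_congr fun n => ?_
  rw [myA, Nat.centralBinom_eq_two_mul_choose]
  ring
end

section
/- ∑_{n≥1} 16^n / (n² (2n+1)² binom(2n,n)²) = 4(π − 3). -/
open Filter Real Topology Finset

noncomputable def gAux (k : ℕ) : ℝ :=
  (4 * k + 3) * (2 * k + 3) / (k + 1) ^ 2 * Real.Wallis.W (k + 1)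

lemma term_eq_W (k : ℕ) :
    (16 : ℝ) ^ (k + 1) /
        ((k + 1) ^ 2 * (2 * (k + 1) + 1) ^ 2 *
          (Nat.choose (2 * (k + 1)) (k + 1)) ^ 2) =
      Real.Wallis.W (k + 1) / ((2 * k + 3) * (k + 1) ^ 2) := by
  rw [Real.Wallis.W_eq_factorial_ratio]
  have hcn := Nat.choose_mul_factorial_mul_factorial (show k + 1 ≤ 2 * (k + 1) by omega)
  rw [show 2 * (k + 1) - (k + 1) = k + 1 from by omega] at hcn
  have hc : ((2 * (k + 1)).choose (k + 1) : ℝ) * ((k+1).factorial * (k+1).factorial)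
      = ((2 * (k + 1)).factorial : ℝ) := by
    rw [← Nat.cast_mul, ← Nat.cast_mul, ← Nat.mul_assoc, hcn]
  have h1 : ((2 * (k + 1)).choose (k + 1) : ℝ) ≠ 0 := by
    exact_mod_cast (Nat.choose_pos (show k + 1 ≤ 2 * (k + 1) by omega)).ne'
  have h2 : ((k+1).factorial : ℝ) ≠ 0 := by positivity
  have h16 : (2:ℝ) ^ (4 * (k+1)) = 16 ^ (k+1) := by
    rw [pow_mul]; norm_num
  rw [← hc, h16]
  have hk1 : ((k:ℝ) + 1) ≠ 0 := by positivity
  have hk2 : (2 * ((k:ℝ) + 1) + 1) ≠ 0 := by positivity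
  have hk3 : (2 * (k:ℝ) + 3) ≠ 0 := by positivity
  push_cast
  field_simp
  ring

lemma gAux_sub (k : ℕ) :
    gAux (k + 1) - gAux k = Real.Wallis.W (k + 1) / ((2 * k + 3) * (k + 1) ^ 2) := by
  have hW := Real.Wallis.W_succ (k + 1)
  unfold gAux
  rw [hW]
  push_cast
  have h1 : ((k : ℝ) + 1) ≠ 0 := by positivity
  have h2 : ((k : ℝ) + 1 + 1) ≠ 0 := by positivity
  have h3 : (2 * (k : ℝ) + 1 + 1 + 1) ≠ 0 := by positivity
  have h4 : (2 * ((k : ℝ) + 1) + 1) ≠ 0 := by positivity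
  have h5 : (2 * ((k : ℝ) + 1) + 3) ≠ 0 := by positivity
  have h6 : (2 * (k : ℝ) + 3) ≠ 0 := by positivity
  field_simp
  ring

theorem stmt_5 :
    ∑' n : ℕ,
        (16 : ℝ) ^ (n + 1) /
          ((n + 1) ^ 2 * (2 * (n + 1) + 1) ^ 2 *
            (Nat.choose (2 * (n + 1)) (n + 1)) ^ 2) =
      4 * (Real.pi - 3) := by
  set f : ℕ → ℝ := fun n =>
    (16 : ℝ) ^ (n + 1) /
      ((n + 1) ^ 2 * (2 * (n + 1) + 1) ^ 2 *
        (Nat.choose (2 * (n + 1)) (n + 1)) ^ 2) with hf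
  have hterm : ∀ k, f k = gAux (k + 1) - gAux k := fun k =>
    (term_eq_W k).trans (gAux_sub k).symm
  have hnonneg : ∀ k, 0 ≤ f k := by
    intro k
    rw [hf]
    have : 0 < (Nat.choose (2 * (k + 1)) (k + 1) : ℝ) :=
      Nat.cast_pos.mpr (Nat.choose_pos (by omega))
    positivity
  -- partial sums
  have hpartial : ∀ N, ∑ k ∈ range N, f k = gAux N - gAux 0 := by
    intro N
    calc ∑ k ∈ range N, f k = ∑ k ∈ range N, (gAux (k + 1) - gAux k) := by
          exact Finset.sum_congr rfl fun k _ => hterm k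
      _ = gAux N - gAux 0 := Finset.sum_range_sub gAux N
  -- g 0 = 12
  have hg0 : gAux 0 = 12 := by
    unfold gAux Real.Wallis.W
    norm_num
  -- limit of gAux
  have hlim : Tendsto gAux atTop (𝓝 (4 * Real.pi)) := by
    have hW : Tendsto (fun k : ℕ => Real.Wallis.W (k + 1)) atTop (𝓝 (Real.pi / 2)) :=
      Real.tendsto_prod_pi_div_two.comp (tendsto_add_atTop_nat 1)
    have hrat : Tendsto (fun k : ℕ => ((4 * k + 3) * (2 * k + 3) / (k + 1) ^ 2 : ℝ))
        atTop (𝓝 8) := by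
      have h1 : Tendsto (fun k : ℕ => (1 : ℝ) / (k + 1)) atTop (𝓝 0) :=
        tendsto_one_div_add_atTop_nhds_zero_nat
      have : Tendsto (fun k : ℕ => ((4 : ℝ) - 1 / (k + 1)) * (2 + 1 / (k + 1)))
          atTop (𝓝 ((4 - 0) * (2 + 0))) :=
        ((tendsto_const_nhds.sub h1).mul (tendsto_const_nhds.add h1))
      have heq : (fun k : ℕ => ((4 : ℝ) - 1 / (k + 1)) * (2 + 1 / (k + 1)))
          = fun k : ℕ => ((4 * k + 3) * (2 * k + 3) / (k + 1) ^ 2 : ℝ) := by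
        funext k
        have h1 : ((k : ℝ) + 1) ≠ 0 := by positivity
        field_simp
        ring
      rw [heq] at this
      norm_num at this
      exact this
    have := hrat.mul hW
    norm_num at this
    convert this using 2
    · rfl
    · ring
  have htend : Tendsto (fun N => ∑ k ∈ range N, f k) atTop (𝓝 (4 * Real.pi - 12)) := by
    simp only [hpartial, hg0]
    exact hlim.sub tendsto_const_nhds
  have hmono : Monotone fun N => ∑ k ∈ range N, f k := by
    apply monotone_nat_of_le_succ
    intro n
    rw [Finset.sum_range_succ]
    exact le_add_of_nonneg_right (hnonneg n)
  have hbound : ∀ N, ∑ k ∈ range N, f k ≤ 4 * Real.pi - 12 := fun N =>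
    hmono.ge_of_tendsto htend N
  have hsummable : Summable f := summable_of_sum_range_le hnonneg hbound
  have := hsummable.hasSum.tendsto_sum_nat
  have heq := tendsto_nhds_unique this htend
  rw [hf] at heq
  rw [heq]
  ring
end

section
/- ∑_{n≥1} (1/(n² 2^n)) · (1 − 1/binom(3n, n)) = π²/24. -/
open MeasureTheory Real Set Nat

-- factorial product identity
lemma prod_fac (m k : ℕ) : m ! * ∏ j ∈ Finset.range k, (m + 1 + j) = (m + k)! := by
  induction k with
  | zero => simp
  | succ k ih =>
    rw [Finset.prod_range_succ, ← mul_assoc, ih]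
    have : m + (k + 1) = (m + k) + 1 := by omega
    rw [this, Nat.factorial_succ]
    ring

-- real Beta integral at natural arguments
lemma beta_nat_s8 (m n : ℕ) :
    ∫ x in (0:ℝ)..1, x ^ m * (1 - x) ^ n = (m ! * n ! : ℝ) / (m + n + 1)! := by
  have hre : 0 < Complex.re ((m : ℂ) + 1) := by simp; positivity
  have h := Complex.betaIntegral_eval_nat_add_one_right hre n
  have hprod : (∏ j ∈ Finset.range (n + 1), ((m : ℂ) + 1 + j)) = ((m + n + 1)! : ℂ) / (m ! : ℂ) := by
    have := prod_fac m (n + 1)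
    have h2 : ((m ! : ℂ)) * (∏ j ∈ Finset.range (n + 1), ((m : ℂ) + 1 + j)) = ((m + (n+1))! : ℂ) := by
      rw [← this]
      push_cast
      simp
    rw [eq_div_iff (by exact_mod_cast Nat.cast_ne_zero.2 m.factorial_ne_zero)]
    rw [mul_comm] at h2
    rw [h2]
    norm_cast
  have hint : Complex.betaIntegral ((m : ℂ) + 1) ((n : ℂ) + 1) =
      ((∫ x in (0:ℝ)..1, x ^ m * (1 - x) ^ n : ℝ) : ℂ) := by
    rw [Complex.betaIntegral, ← intervalIntegral.integral_ofReal]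
    refine intervalIntegral.integral_congr fun x hx => ?_
    have e1 : (m : ℂ) + 1 - 1 = ((m : ℕ) : ℂ) := by ring
    have e2 : (n : ℂ) + 1 - 1 = ((n : ℕ) : ℂ) := by ring
    rw [e1, e2, Complex.cpow_natCast, Complex.cpow_natCast]
    push_cast
    ring
  rw [hint, hprod] at h
  have hm : ((m ! : ℂ)) ≠ 0 := Nat.cast_ne_zero.2 m.factorial_ne_zero
  have hmn : (((m+n+1)! : ℂ)) ≠ 0 := Nat.cast_ne_zero.2 (m+n+1).factorial_ne_zero
  have : ((∫ x in (0:ℝ)..1, x ^ m * (1 - x) ^ n : ℝ) : ℂ) = ((m ! * n ! : ℝ) : ℂ) / (((m+n+1)! : ℝ) : ℂ) := by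
    rw [h]
    push_cast
    field_simp
  exact_mod_cast this

lemma hasSumF {t : ℝ} (ht : t ∈ Ioo (0:ℝ) 1) :
    HasSum (fun n : ℕ => t ^ n * (1 - (1 - t) ^ (2 * n + 2)) / ((n + 1) * 2 ^ (n + 1)))
      (Real.log (1 + t ^ 2) / t) := by
  obtain ⟨ht0, ht1⟩ := ht
  have h1 : |t / 2| < 1 := by rw [abs_of_pos (by positivity)]; linarith
  have h2 : |t * (1 - t) ^ 2 / 2| < 1 := by
    rw [abs_of_nonneg (by nlinarith)]
    nlinarith [sq_nonneg (1 - t)]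
  have A := hasSum_pow_div_log_of_abs_lt_one h1
  have B := hasSum_pow_div_log_of_abs_lt_one h2
  have C := (A.sub B).div_const t
  have hfac : 1 - t * (1 - t) ^ 2 / 2 = (1 + t ^ 2) * (1 - t / 2) := by ring
  have hlog : Real.log (1 - t * (1 - t) ^ 2 / 2)
      = Real.log (1 + t ^ 2) + Real.log (1 - t / 2) := by
    rw [hfac, Real.log_mul (by positivity) (by nlinarith)]
  have hval : (-Real.log (1 - t / 2) - -Real.log (1 - t * (1 - t) ^ 2 / 2)) / t
      = Real.log (1 + t ^ 2) / t := by rw [hlog]; ring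
  rw [hval] at C
  convert C using 2 with n
  · rfl
  have hne : t ≠ 0 := ne_of_gt ht0
  have e1 : (t / 2) ^ (n + 1) = t ^ (n + 1) / 2 ^ (n + 1) := div_pow t 2 (n + 1)
  have e2 : (t * (1 - t) ^ 2 / 2) ^ (n + 1) = t ^ (n + 1) * (1 - t) ^ (2 * n + 2) / 2 ^ (n + 1) := by
    rw [div_pow, mul_pow, ← pow_mul]
    have : 2 * (n + 1) = 2 * n + 2 := by ring
    rw [this]
  rw [e1, e2]
  field_simp
  ring

lemma hasSumH {t : ℝ} (ht : t ∈ Ioo (0:ℝ) 1) :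
    HasSum (fun n : ℕ => (t ^ (2 * n + 1) - t ^ (4 * n + 3)) / (n + 1))
      (Real.log (1 + t ^ 2) / t) := by
  obtain ⟨ht0, ht1⟩ := ht
  have h1 : |t ^ 2| < 1 := by
    rw [abs_of_pos (by positivity)]; exact pow_lt_one₀ ht0.le ht1 two_ne_zero
  have h2 : |t ^ 4| < 1 := by
    rw [abs_of_pos (by positivity)]; exact pow_lt_one₀ ht0.le ht1 four_ne_zero
  have A := hasSum_pow_div_log_of_abs_lt_one h1
  have B := hasSum_pow_div_log_of_abs_lt_one h2
  have C := (A.sub B).div_const t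
  have hfac : (1 : ℝ) - t ^ 4 = (1 + t ^ 2) * (1 - t ^ 2) := by ring
  have hlog : Real.log (1 - t ^ 4) = Real.log (1 + t ^ 2) + Real.log (1 - t ^ 2) := by
    have : t ^ 2 < 1 := pow_lt_one₀ ht0.le ht1 two_ne_zero
    rw [hfac, Real.log_mul (by positivity) (by nlinarith)]
  have hval : (-Real.log (1 - t ^ 2) - -Real.log (1 - t ^ 4)) / t
      = Real.log (1 + t ^ 2) / t := by rw [hlog]; ring
  rw [hval] at C
  convert C using 2 with n
  · rfl
  have hne : t ≠ 0 := ne_of_gt ht0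
  rw [← pow_mul, ← pow_mul]
  have e1 : 2 * (n + 1) = (2 * n + 1) + 1 := by ring
  have e2 : 4 * (n + 1) = (4 * n + 3) + 1 := by ring
  rw [e1, e2, pow_succ, pow_succ]
  field_simp
  ring

lemma intF (n : ℕ) :
    ∫ t in Ioo (0:ℝ) 1, t ^ n * (1 - (1 - t) ^ (2 * n + 2)) / (((n : ℝ) + 1) * 2 ^ (n + 1)) =
      1 / (((n : ℝ) + 1) ^ 2 * 2 ^ (n + 1)) *
        (1 - 1 / ((3 * (n + 1)).choose (n + 1) : ℝ)) := by
  rw [← integral_Ioc_eq_integral_Ioo, ← intervalIntegral.integral_of_le zero_le_one]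
  have int1 : IntervalIntegrable (fun t : ℝ => t ^ n) volume 0 1 :=
    (continuous_pow n).intervalIntegrable 0 1
  have int2 : IntervalIntegrable (fun t : ℝ => t ^ n * (1 - t) ^ (2 * n + 2)) volume 0 1 :=
    (Continuous.mul (continuous_pow n) (by fun_prop)).intervalIntegrable 0 1
  have split : (∫ t in (0:ℝ)..1, t ^ n * (1 - (1 - t) ^ (2 * n + 2)) / (((n : ℝ) + 1) * 2 ^ (n + 1)))
      = ((∫ t in (0:ℝ)..1, t ^ n) - ∫ t in (0:ℝ)..1, t ^ n * (1 - t) ^ (2 * n + 2))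
          / (((n : ℝ) + 1) * 2 ^ (n + 1)) := by
    rw [← intervalIntegral.integral_sub int1 int2, intervalIntegral.integral_div]
    congr 1
    apply intervalIntegral.integral_congr
    intro t _
    ring
  rw [split, integral_pow, beta_nat_s8]
  have hidx : n + (2 * n + 2) + 1 = 3 * (n + 1) := by omega
  rw [hidx]
  have hch := Nat.choose_mul_factorial_mul_factorial (show n + 1 ≤ 3 * (n + 1) by omega)
  have hsub : 3 * (n + 1) - (n + 1) = 2 * n + 2 := by omega
  rw [hsub] at hch
  have key : (((3 * (n + 1)).choose (n + 1) : ℝ)) * (n + 1)! * (2 * n + 2)! = ((3 * (n + 1))! : ℝ) := by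
    exact_mod_cast congrArg (Nat.cast (R := ℝ)) hch
  have hc0 : (((3 * (n + 1)).choose (n + 1) : ℝ)) ≠ 0 :=
    Nat.cast_ne_zero.2 (Nat.choose_pos (by omega)).ne'
  have hn0 : ((n : ℝ) + 1) ≠ 0 := by positivity
  have h20 : ((2 : ℝ)) ^ (n + 1) ≠ 0 := by positivity
  have hf1 : ((n ! : ℝ)) ≠ 0 := Nat.cast_ne_zero.2 n.factorial_ne_zero
  have hf2 : (((2 * n + 2)! : ℝ)) ≠ 0 := Nat.cast_ne_zero.2 (2 * n + 2).factorial_ne_zero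
  have hf3 : (((3 * (n + 1))! : ℝ)) ≠ 0 := Nat.cast_ne_zero.2 (3 * (n + 1)).factorial_ne_zero
  have hfac : ((n + 1)! : ℝ) = ((n : ℝ) + 1) * (n ! : ℝ) := by
    rw [Nat.factorial_succ]; push_cast; ring
  rw [hfac] at key
  have key2 : (n ! * (2 * n + 2)! : ℝ) / ((3 * (n + 1))! : ℝ)
      = 1 / (((n : ℝ) + 1) * ((3 * (n + 1)).choose (n + 1) : ℝ)) := by
    rw [div_eq_div_iff hf3 (by positivity)]
    linear_combination key
  rw [key2, one_pow, zero_pow (Nat.succ_ne_zero n), sub_zero]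
  field_simp

lemma intH (n : ℕ) :
    ∫ t in Ioo (0:ℝ) 1, (t ^ (2 * n + 1) - t ^ (4 * n + 3)) / ((n : ℝ) + 1) =
      1 / (4 * ((n : ℝ) + 1) ^ 2) := by
  rw [← integral_Ioc_eq_integral_Ioo, ← intervalIntegral.integral_of_le zero_le_one]
  have int1 : IntervalIntegrable (fun t : ℝ => t ^ (2 * n + 1)) volume 0 1 :=
    (continuous_pow _).intervalIntegrable 0 1
  have int2 : IntervalIntegrable (fun t : ℝ => t ^ (4 * n + 3)) volume 0 1 :=
    (continuous_pow _).intervalIntegrable 0 1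
  rw [show (fun t : ℝ => (t ^ (2 * n + 1) - t ^ (4 * n + 3)) / ((n : ℝ) + 1))
      = fun t : ℝ => (t ^ (2 * n + 1) - t ^ (4 * n + 3)) / ((n : ℝ) + 1) from rfl]
  rw [intervalIntegral.integral_div, intervalIntegral.integral_sub int1 int2,
    integral_pow, integral_pow]
  have hn0 : ((n : ℝ) + 1) ≠ 0 := by positivity
  push_cast
  rw [one_pow, one_pow, zero_pow (by omega), zero_pow (by omega)]
  field_simp
  ring

lemma basel' : HasSum (fun n : ℕ => (1 : ℝ) / ((n : ℝ) + 1) ^ 2) (π ^ 2 / 6) := by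
  have h := (hasSum_nat_add_iff (f := fun n : ℕ => (1 : ℝ) / (n : ℝ) ^ 2) 1).mpr
    (by simpa using hasSum_zeta_two)
  convert h using 2 with n
  · rfl
  push_cast
  ring

lemma hasSum_quarter : HasSum (fun n : ℕ => (1 : ℝ) / (4 * ((n : ℝ) + 1) ^ 2)) (π ^ 2 / 24) := by
  have h := basel'.div_const 4
  have e : (π ^ 2 / 6) / 4 = π ^ 2 / 24 := by ring
  rw [e] at h
  have e2 : (fun n : ℕ => (1 : ℝ) / (4 * ((n : ℝ) + 1) ^ 2))
      = fun n : ℕ => ((1 : ℝ) / ((n : ℝ) + 1) ^ 2) / 4 := by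
    funext n
    rw [div_div, mul_comm]
  rw [e2]
  exact h

theorem stmt_8 :
    ∑' n : ℕ,
        (1 : ℝ) / ((n + 1) ^ 2 * 2 ^ (n + 1)) *
          (1 - 1 / (Nat.choose (3 * (n + 1)) (n + 1))) =
      Real.pi ^ 2 / 24 := by
  set F : ℕ → ℝ → ℝ := fun n t => t ^ n * (1 - (1 - t) ^ (2 * n + 2)) / (((n : ℝ) + 1) * 2 ^ (n + 1))
    with hF
  set H : ℕ → ℝ → ℝ := fun n t => (t ^ (2 * n + 1) - t ^ (4 * n + 3)) / ((n : ℝ) + 1) with hHdef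
  have hFnn : ∀ n : ℕ, ∀ t ∈ Ioo (0:ℝ) 1, 0 ≤ F n t := by
    intro n t ht
    obtain ⟨ht0, ht1⟩ := ht
    have h1 : (1 - t) ^ (2 * n + 2) ≤ 1 := pow_le_one₀ (by linarith) (by linarith)
    have h2 : (0:ℝ) ≤ t ^ n := by positivity
    have h3 : (0:ℝ) < ((n : ℝ) + 1) * 2 ^ (n + 1) := by positivity
    exact div_nonneg (mul_nonneg h2 (by linarith)) h3.le
  have hHnn : ∀ n : ℕ, ∀ t ∈ Ioo (0:ℝ) 1, 0 ≤ H n t := by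
    intro n t ht
    obtain ⟨ht0, ht1⟩ := ht
    have h1 : t ^ (4 * n + 3) ≤ t ^ (2 * n + 1) :=
      pow_le_pow_of_le_one ht0.le ht1.le (by omega)
    have h3 : (0:ℝ) < ((n : ℝ) + 1) := by positivity
    exact div_nonneg (by linarith) h3.le
  have hFcont : ∀ n : ℕ, Continuous (F n) := by
    intro n
    exact ((continuous_pow n).mul (by fun_prop)).div_const _
  have hHcont : ∀ n : ℕ, Continuous (H n) := by
    intro n
    exact ((continuous_pow _).sub (continuous_pow _)).div_const _
  have hFint : ∀ n : ℕ, Integrable (F n) (volume.restrict (Ioo (0:ℝ) 1)) := fun n =>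
    ((hFcont n).integrableOn_Icc (a := 0) (b := 1)).mono_set Ioo_subset_Icc_self
  have hHint : ∀ n : ℕ, Integrable (H n) (volume.restrict (Ioo (0:ℝ) 1)) := fun n =>
    ((hHcont n).integrableOn_Icc (a := 0) (b := 1)).mono_set Ioo_subset_Icc_self
  have hFnorm : ∀ n : ℕ, (∫ t in Ioo (0:ℝ) 1, ‖F n t‖) =
      1 / (((n : ℝ) + 1) ^ 2 * 2 ^ (n + 1)) * (1 - 1 / ((3 * (n + 1)).choose (n + 1) : ℝ)) := by
    intro n
    rw [setIntegral_congr_fun measurableSet_Ioo (fun t ht => norm_of_nonneg (hFnn n t ht))]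
    exact intF n
  have hHnorm : ∀ n : ℕ, (∫ t in Ioo (0:ℝ) 1, ‖H n t‖) = 1 / (4 * ((n : ℝ) + 1) ^ 2) := by
    intro n
    rw [setIntegral_congr_fun measurableSet_Ioo (fun t ht => norm_of_nonneg (hHnn n t ht))]
    exact intH n
  have hSa : Summable (fun n : ℕ =>
      1 / (((n : ℝ) + 1) ^ 2 * 2 ^ (n + 1)) * (1 - 1 / ((3 * (n + 1)).choose (n + 1) : ℝ))) := by
    refine Summable.of_nonneg_of_le ?_ ?_ basel'.summable
    · intro n
      have hC1 : (1:ℝ) ≤ ((3 * (n + 1)).choose (n + 1) : ℝ) :=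
        Nat.one_le_cast.2 (Nat.choose_pos (by omega))
      have : (1:ℝ) / ((3 * (n + 1)).choose (n + 1) : ℝ) ≤ 1 := by
        rw [div_le_one (by linarith)]; exact hC1
      exact mul_nonneg (by positivity) (by linarith)
    · intro n
      have hC1 : (0:ℝ) ≤ 1 / ((3 * (n + 1)).choose (n + 1) : ℝ) := by positivity
      have h1 : (1:ℝ) - 1 / ((3 * (n + 1)).choose (n + 1) : ℝ) ≤ 1 := by linarith
      have h2 : (1:ℝ) / (((n : ℝ) + 1) ^ 2 * 2 ^ (n + 1)) ≤ 1 / ((n : ℝ) + 1) ^ 2 := by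
        apply one_div_le_one_div_of_le (by positivity)
        nlinarith [one_le_pow₀ (show (1:ℝ) ≤ 2 by norm_num) (n := n + 1), sq_nonneg ((n:ℝ)+1)]
      calc 1 / (((n : ℝ) + 1) ^ 2 * 2 ^ (n + 1)) * (1 - 1 / ((3 * (n + 1)).choose (n + 1) : ℝ))
          ≤ 1 / (((n : ℝ) + 1) ^ 2 * 2 ^ (n + 1)) * 1 := by
            apply mul_le_mul_of_nonneg_left h1 (by positivity)
        _ ≤ 1 / ((n : ℝ) + 1) ^ 2 := by rw [mul_one]; exact h2
  have hSb : Summable (fun n : ℕ => (1 : ℝ) / (4 * ((n : ℝ) + 1) ^ 2)) := hasSum_quarter.summable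
  have step1 : ∑' n : ℕ, (1 : ℝ) / (((n : ℝ) + 1) ^ 2 * 2 ^ (n + 1)) *
      (1 - 1 / ((3 * (n + 1)).choose (n + 1) : ℝ)) = ∑' n : ℕ, ∫ t in Ioo (0:ℝ) 1, F n t := by
    congr 1
    funext n
    rw [intF n]
  have step2 : ∑' n : ℕ, ∫ t in Ioo (0:ℝ) 1, F n t = ∫ t in Ioo (0:ℝ) 1, ∑' n : ℕ, F n t := by
    apply integral_tsum_of_summable_integral_norm hFint
    simpa only [hFnorm] using hSa
  have step3 : ∫ t in Ioo (0:ℝ) 1, (∑' n : ℕ, F n t) = ∫ t in Ioo (0:ℝ) 1, Real.log (1 + t ^ 2) / t :=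
    setIntegral_congr_fun measurableSet_Ioo (fun t ht => (hasSumF ht).tsum_eq)
  have step4 : ∫ t in Ioo (0:ℝ) 1, Real.log (1 + t ^ 2) / t = ∫ t in Ioo (0:ℝ) 1, ∑' n : ℕ, H n t :=
    setIntegral_congr_fun measurableSet_Ioo (fun t ht => ((hasSumH ht).tsum_eq).symm)
  have step5 : ∫ t in Ioo (0:ℝ) 1, (∑' n : ℕ, H n t) = ∑' n : ℕ, ∫ t in Ioo (0:ℝ) 1, H n t := by
    refine (integral_tsum_of_summable_integral_norm hHint ?_).symm
    simpa only [hHnorm] using hSb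
  have step6 : ∑' n : ℕ, ∫ t in Ioo (0:ℝ) 1, H n t = π ^ 2 / 24 := by
    have : ∀ n : ℕ, (∫ t in Ioo (0:ℝ) 1, H n t) = 1 / (4 * ((n : ℝ) + 1) ^ 2) := fun n => intH n
    rw [tsum_congr this]
    exact hasSum_quarter.tsum_eq
  calc ∑' n : ℕ, (1 : ℝ) / ((n + 1) ^ 2 * 2 ^ (n + 1)) *
          (1 - 1 / (Nat.choose (3 * (n + 1)) (n + 1)))
      = ∑' n : ℕ, ∫ t in Ioo (0:ℝ) 1, F n t := step1
    _ = ∫ t in Ioo (0:ℝ) 1, ∑' n : ℕ, F n t := step2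
    _ = ∫ t in Ioo (0:ℝ) 1, Real.log (1 + t ^ 2) / t := step3
    _ = ∫ t in Ioo (0:ℝ) 1, ∑' n : ℕ, H n t := step4
    _ = ∑' n : ℕ, ∫ t in Ioo (0:ℝ) 1, H n t := step5
    _ = π ^ 2 / 24 := step6
end

section
/- ∑_{n≥1} 2^n / ((n+1) · n² · binom(2n, n)) = π/2 − 1. -/
open MeasureTheory Real Filter Nat

noncomputable def Iint (m : ℕ) : ℝ := ∫ x in (0:ℝ)..1, (1 - x ^ 2) ^ m

lemma Iint_zero : Iint 0 = 1 := by simp [Iint]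

lemma cont_pow (m : ℕ) : Continuous fun x : ℝ => (1 - x ^ 2) ^ m := by fun_prop

lemma Iint_rec (m : ℕ) :
    (2 * m + 3 : ℝ) * Iint (m + 1) = 2 * (m + 1) * Iint m := by
  have hd : ∀ x ∈ Set.uIcc (0:ℝ) 1, HasDerivAt (fun u : ℝ => u * (1 - u ^ 2) ^ (m + 1))
      ((2 * m + 3 : ℝ) * (1 - x ^ 2) ^ (m + 1) - 2 * (m + 1) * (1 - x ^ 2) ^ m) x := by
    intro x _
    have h1 : HasDerivAt (fun u : ℝ => u * (1 - u ^ 2) ^ (m + 1))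
        (1 * (1 - x ^ 2) ^ (m + 1) +
          x * (((m + 1 : ℕ) : ℝ) * (1 - x ^ 2) ^ m * (0 - 2 * x))) x := by
      have hu : HasDerivAt (fun u : ℝ => 1 - u ^ 2) (0 - 2 * x) x := by
        simpa using ((hasDerivAt_pow 2 x).const_sub (1:ℝ))
      exact (hasDerivAt_id x).mul (hu.pow (m+1))
    refine h1.congr_deriv ?_
    push_cast
    ring_nf
  have hint : IntervalIntegrable
      (fun x : ℝ => (2 * m + 3 : ℝ) * (1 - x ^ 2) ^ (m + 1) - 2 * (m + 1) * (1 - x ^ 2) ^ m)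
      volume 0 1 := by
    apply Continuous.intervalIntegrable; fun_prop
  have h0 := intervalIntegral.integral_eq_sub_of_hasDerivAt hd hint
  simp only [one_pow, mul_one, one_mul] at h0
  rw [intervalIntegral.integral_sub ((by fun_prop : Continuous fun x : ℝ => (2 * m + 3 : ℝ) * (1 - x ^ 2) ^ (m + 1)).intervalIntegrable 0 1)
      ((by fun_prop : Continuous fun x : ℝ => (2 * (m + 1) : ℝ) * (1 - x ^ 2) ^ m).intervalIntegrable 0 1),
    intervalIntegral.integral_const_mul, intervalIntegral.integral_const_mul] at h0
  norm_num at h0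
  unfold Iint
  linarith [h0]

lemma Iint_eq (m : ℕ) : Iint m = 4 ^ m / ((2 * m + 1) * Nat.centralBinom m) := by
  induction m with
  | zero => simp [Iint_zero, Nat.centralBinom_zero]
  | succ m ih =>
    have hrec := Iint_rec m
    rw [ih] at hrec
    have hC := Nat.succ_mul_centralBinom_succ m
    have hCr : ((m:ℝ) + 1) * (Nat.centralBinom (m+1) : ℝ)
        = 2 * (2 * m + 1) * Nat.centralBinom m := by
      exact_mod_cast congrArg (Nat.cast : ℕ → ℝ) hC
    have hCm : (0:ℝ) < Nat.centralBinom m := by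
      exact_mod_cast Nat.centralBinom_pos m
    have hCm1 : (0:ℝ) < Nat.centralBinom (m+1) := by
      exact_mod_cast Nat.centralBinom_pos (m+1)
    have h1 : (0:ℝ) < 2 * m + 1 := by positivity
    have h3 : (0:ℝ) < 2 * m + 3 := by positivity
    have hstep : Iint (m+1) = 2 * (m + 1) * (4 ^ m / ((2 * m + 1) * Nat.centralBinom m)) / (2 * m + 3) := by
      field_simp at hrec ⊢
      linarith [hrec]
    have hCr2 : (Nat.centralBinom (m+1) : ℝ) = 2 * (2 * m + 1) * Nat.centralBinom m / (m + 1) := by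
      rw [eq_div_iff (by positivity)]
      linarith [hCr]
    rw [hstep, hCr2]
    push_cast
    field_simp
    ring

noncomputable def gterm (m : ℕ) : ℝ := 2 ^ m / ((2 * m + 1) * Nat.centralBinom m)

lemma gterm_eq_integral (m : ℕ) :
    gterm m = ∫ x in Set.Ioc (0:ℝ) 1, ((1 - x ^ 2) / 2) ^ m := by
  have h1 : ∀ x : ℝ, ((1 - x ^ 2) / 2) ^ m = (1 - x ^ 2) ^ m * (1/2) ^ m := by
    intro x; rw [← mul_pow]; congr 1; ring
  simp_rw [h1]
  rw [MeasureTheory.integral_mul_const, ← intervalIntegral.integral_of_le zero_le_one]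
  have := Iint_eq m
  unfold Iint at this
  rw [this]
  have hCm : (0:ℝ) < Nat.centralBinom m := by exact_mod_cast Nat.centralBinom_pos m
  have h2 : (0:ℝ) < 2 * m + 1 := by positivity
  unfold gterm
  have h4 : (4:ℝ) ^ m = 2 ^ m * 2 ^ m := by rw [← mul_pow]; norm_num
  rw [h4, div_pow, one_pow]
  field_simp

lemma aux_mem_bound {x : ℝ} (hx : x ∈ Set.Ioc (0:ℝ) 1) :
    0 ≤ (1 - x ^ 2) / 2 ∧ (1 - x ^ 2) / 2 ≤ 1 / 2 := by
  obtain ⟨h0, h1⟩ := hx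
  constructor <;> nlinarith

lemma hasSum_gterm : HasSum gterm (π / 2) := by
  have hF_int : ∀ m : ℕ, Integrable (fun x : ℝ => ((1 - x ^ 2) / 2) ^ m)
      (volume.restrict (Set.Ioc (0:ℝ) 1)) := by
    intro m
    exact (Continuous.integrableOn_Ioc (by fun_prop))
  have hF_norm : ∀ m : ℕ, (∫ x in Set.Ioc (0:ℝ) 1, ‖((1 - x ^ 2) / 2) ^ m‖) ≤ (1/2) ^ m := by
    intro m
    have : (∫ x in Set.Ioc (0:ℝ) 1, ‖((1 - x ^ 2) / 2) ^ m‖)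
        ≤ ∫ _x in Set.Ioc (0:ℝ) 1, ((1:ℝ)/2) ^ m := by
      apply MeasureTheory.setIntegral_mono_on ((hF_int m).norm) (by simp) measurableSet_Ioc
      intro x hx
      obtain ⟨ha, hb⟩ := aux_mem_bound hx
      rw [Real.norm_eq_abs, abs_pow, abs_of_nonneg ha]
      exact pow_le_pow_left₀ ha hb m
    simpa using this
  have hF_sum : Summable fun m : ℕ => (∫ x in Set.Ioc (0:ℝ) 1, ‖((1 - x ^ 2) / 2) ^ m‖) := by
    apply Summable.of_nonneg_of_le (fun m => ?_) hF_norm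
      (summable_geometric_of_lt_one (by norm_num) (by norm_num))
    positivity
  have key := MeasureTheory.hasSum_integral_of_summable_integral_norm hF_int hF_sum
  have htsum : (∫ x in Set.Ioc (0:ℝ) 1, ∑' m : ℕ, ((1 - x ^ 2) / 2) ^ m) = π / 2 := by
    rw [MeasureTheory.setIntegral_congr_fun measurableSet_Ioc
      (g := fun x : ℝ => 2 * (1 / (1 + x ^ 2)))]
    · rw [← intervalIntegral.integral_of_le zero_le_one,
        intervalIntegral.integral_const_mul, integral_one_div_one_add_sq]
      rw [Real.arctan_one, Real.arctan_zero]
      ring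
    · intro x hx
      obtain ⟨ha, hb⟩ := aux_mem_bound hx
      show (∑' m : ℕ, ((1 - x ^ 2) / 2) ^ m) = _
      rw [tsum_geometric_of_lt_one ha (lt_of_le_of_lt hb (by norm_num))]
      show ((1:ℝ) - (1 - x ^ 2) / 2)⁻¹ = 2 * (1 / (1 + x ^ 2))
      have hne : (1:ℝ) - (1 - x ^ 2) / 2 ≠ 0 := by nlinarith
      have hne2 : (1:ℝ) + x ^ 2 ≠ 0 := by positivity
      rw [inv_eq_one_div, mul_one_div, div_eq_div_iff hne hne2]
      ring
  rw [htsum] at key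
  have : ∀ m : ℕ, gterm m = ∫ x in Set.Ioc (0:ℝ) 1, ((1 - x ^ 2) / 2) ^ m :=
    gterm_eq_integral
  simpa [← this] using key

noncomputable def cterm (m : ℕ) : ℝ := (1 - m) * 2 ^ m / (m ^ 2 * Nat.centralBinom m)

lemma cterm_one : cterm 1 = 0 := by norm_num [cterm]

lemma cterm_bound (m : ℕ) (hm : 1 ≤ m) : |cterm m| ≤ 2 * (1/2) ^ m := by
  have hC : (0:ℝ) < Nat.centralBinom m := by exact_mod_cast Nat.centralBinom_pos m
  have hm' : (1:ℝ) ≤ m := by exact_mod_cast hm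
  have hnat : (m - 1) * 4 ^ m ≤ 2 * m ^ 2 * Nat.centralBinom m := by
    calc (m - 1) * 4 ^ m ≤ m * 4 ^ m := by gcongr; omega
    _ ≤ m * (2 * m * Nat.centralBinom m) := by
        gcongr
        exact Nat.four_pow_le_two_mul_self_mul_centralBinom m hm
    _ = 2 * m ^ 2 * Nat.centralBinom m := by ring
  have hreal : ((m:ℝ) - 1) * 4 ^ m ≤ 2 * (m:ℝ) ^ 2 * Nat.centralBinom m := by
    have h := (Nat.cast_le (α := ℝ)).2 hnat
    push_cast [Nat.cast_sub hm] at h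
    convert h using 2 <;> push_cast <;> ring
  unfold cterm
  rw [abs_div, abs_of_nonneg (by positivity : (0:ℝ) ≤ (m:ℝ) ^ 2 * Nat.centralBinom m),
    abs_mul, abs_of_nonpos (by linarith : (1:ℝ) - (m:ℝ) ≤ 0),
    abs_of_nonneg (by positivity : (0:ℝ) ≤ (2:ℝ) ^ m)]
  rw [div_le_iff₀ (by positivity)]
  have h2 : (-(1 - (m:ℝ))) * 2 ^ m = ((m:ℝ) - 1) * 4 ^ m * (1/2) ^ m := by
    rw [mul_assoc, ← mul_pow]; norm_num
  rw [h2]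
  calc ((m:ℝ) - 1) * 4 ^ m * (1/2) ^ m ≤ 2 * (m:ℝ) ^ 2 * Nat.centralBinom m * (1/2) ^ m := by
        gcongr
    _ = 2 * (1/2) ^ m * ((m:ℝ) ^ 2 * Nat.centralBinom m) := by ring

lemma summable_cterm_shift : Summable fun n : ℕ => cterm (n + 1) := by
  apply Summable.of_abs
  apply Summable.of_nonneg_of_le (fun n => abs_nonneg _) (fun n => ?_)
    (summable_geometric_of_lt_one (show (0:ℝ) ≤ 1/2 by norm_num) (by norm_num))
  calc |cterm (n + 1)| ≤ 2 * (1/2) ^ (n + 1) := cterm_bound (n+1) (Nat.le_add_left 1 n)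
    _ = (1/2) ^ n := by rw [pow_succ]; ring

lemma tendsto_cterm : Tendsto (fun N : ℕ => cterm (N + 1)) atTop (nhds 0) := by
  refine squeeze_zero_norm (fun n => ?_)
    (tendsto_pow_atTop_nhds_zero_of_lt_one (show (0:ℝ) ≤ 1/2 by norm_num) (by norm_num))
  calc ‖cterm (n + 1)‖ ≤ 2 * (1/2) ^ (n + 1) := cterm_bound (n+1) (Nat.le_add_left 1 n)
    _ = (1/2) ^ n := by rw [pow_succ]; ring

lemma hasSum_tele : HasSum (fun n : ℕ => cterm (n + 1) - cterm (n + 2)) 0 := by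
  have hs : Summable fun n : ℕ => cterm (n + 1) - cterm (n + 2) := by
    have h2 : Summable fun n : ℕ => cterm (n + 2) := by
      have := (summable_nat_add_iff (f := fun n : ℕ => cterm (n + 1)) 1).2 summable_cterm_shift
      simpa [add_assoc] using this
    exact summable_cterm_shift.sub h2
  obtain ⟨l, hl⟩ := hs
  have h1 := hl.tendsto_sum_nat
  have h2 : Tendsto (fun N : ℕ => ∑ n ∈ Finset.range N, (cterm (n + 1) - cterm (n + 2)))
      atTop (nhds 0) := by
    have he : ∀ N : ℕ, ∑ n ∈ Finset.range N, (cterm (n + 1) - cterm (n + 2))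
        = cterm 1 - cterm (N + 1) := by
      intro N
      have := Finset.sum_range_sub' (fun i => cterm (i + 1)) N
      simpa [add_assoc] using this
    simp_rw [he, cterm_one, zero_sub]
    simpa using tendsto_cterm.neg
  rwa [tendsto_nhds_unique h1 h2] at hl

lemma term_identity (n : ℕ) :
    (2 : ℝ) ^ (n + 1) /
        ((n + 2) * (n + 1) ^ 2 * (Nat.choose (2 * (n + 1)) (n + 1))) =
      (cterm (n + 1) - cterm (n + 2)) + gterm (n + 1) := by
  have hch : (Nat.choose (2 * (n + 1)) (n + 1)) = Nat.centralBinom (n + 1) :=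
    (Nat.centralBinom_eq_two_mul_choose (n + 1)).symm
  rw [hch]
  unfold cterm gterm
  have hC1 : (0:ℝ) < Nat.centralBinom (n + 1) := by exact_mod_cast Nat.centralBinom_pos (n+1)
  have hC2 : (0:ℝ) < Nat.centralBinom (n + 2) := by exact_mod_cast Nat.centralBinom_pos (n+2)
  have hrec : ((n:ℝ) + 2) * Nat.centralBinom (n + 2)
      = 2 * (2 * ((n:ℝ) + 1) + 1) * Nat.centralBinom (n + 1) := by
    have := Nat.succ_mul_centralBinom_succ (n + 1)
    exact_mod_cast congrArg (Nat.cast : ℕ → ℝ) this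
  have hC2eq : (Nat.centralBinom (n + 2) : ℝ)
      = 2 * (2 * ((n:ℝ) + 1) + 1) * Nat.centralBinom (n + 1) / ((n:ℝ) + 2) := by
    rw [eq_div_iff (by positivity)]
    linarith [hrec]
  rw [hC2eq]
  push_cast
  have hn1 : ((n:ℝ) + 1) ≠ 0 := by positivity
  have hn2 : ((n:ℝ) + 2) ≠ 0 := by positivity
  have hn3 : (2 * ((n:ℝ) + 1) + 1) ≠ 0 := by positivity
  field_simp
  ring

theorem stmt_9 :
    ∑' n : ℕ,
        (2 : ℝ) ^ (n + 1) /
          ((n + 2) * (n + 1) ^ 2 * (Nat.choose (2 * (n + 1)) (n + 1))) =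
      Real.pi / 2 - 1 := by
  have hg : HasSum (fun n : ℕ => gterm (n + 1)) (π / 2 - 1) := by
    have h := (hasSum_nat_add_iff' (f := gterm) 1).2 hasSum_gterm
    have h0 : ∑ i ∈ Finset.range 1, gterm i = 1 := by
      simp [gterm, Nat.centralBinom_zero]
    rwa [h0] at h
  have hsum : HasSum
      (fun n : ℕ => (2 : ℝ) ^ (n + 1) /
        ((n + 2) * (n + 1) ^ 2 * (Nat.choose (2 * (n + 1)) (n + 1))))
      (π / 2 - 1) := by
    have h := hasSum_tele.add hg
    rw [zero_add] at h
    simpa only [term_identity] using h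
  exact hsum.tsum_eq
end
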